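/- arXiv:2002.12743 — 5 statements merged into one kernel-verified Lean document; each statement's English description precedes it below -/
import Mathlib

section
/- Let G and H be groups and p : G → H a surjective group homomorphism, and let K = ker p. If φ : G → ℝ is a homogeneous quasimorphism that vanishes on K, then there exists a homogeneous quasimorphism ψ : H → ℝ such that φ = ψ ∘ p. -/
/-- A quasimorphism on a group: a real-valued function with finite defect. -/
def IsQuasimorphism {G : Type*} [Group G] (f : G → ℝ) : Prop :=
  ∃ C : ℝ, ∀ g h : G, |f (g * h) - f g - f h| ≤ C

/-- A homogeneous function: `f (g ^ n) = n * f g` for all integers `n`. -/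
def IsHomogeneous {G : Type*} [Group G] (f : G → ℝ) : Prop :=
  ∀ (g : G) (n : ℤ), f (g ^ n) = (n : ℝ) * f g

/-- Shtern: a homogeneous quasimorphism vanishing on the kernel of a
surjective homomorphism `p : G →* H` descends to a homogeneous quasimorphism on `H`. -/
theorem shtern_descends {G H : Type*} [Group G] [Group H] (p : G →* H)
    (hp : Function.Surjective p) (φ : G → ℝ)
    (hqm : IsQuasimorphism φ) (hhom : IsHomogeneous φ)
    (hker : ∀ g : G, g ∈ p.ker → φ g = 0) :
    ∃ ψ : H → ℝ, IsQuasimorphism ψ ∧ IsHomogeneous ψ ∧ ∀ g : G, φ g = ψ (p g) := by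
  obtain ⟨D, hD⟩ := hqm
  -- φ is constant on fibers of p
  have key : ∀ x y : G, p x = p y → φ x = φ y := by
    intro x y hxy
    have hbound : ∀ n : ℕ, (n : ℝ) * |φ x - φ y| ≤ D := by
      intro n
      have hk : y ^ (n : ℤ) * (y ^ (n : ℤ))⁻¹ * x ^ (n : ℤ) = x ^ (n : ℤ) := by group
      have hmem : (y ^ (n : ℤ))⁻¹ * x ^ (n : ℤ) ∈ p.ker := by
        simp [MonoidHom.mem_ker, hxy]
      have hφk : φ ((y ^ (n : ℤ))⁻¹ * x ^ (n : ℤ)) = 0 := hker _ hmem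
      have := hD (y ^ (n : ℤ)) ((y ^ (n : ℤ))⁻¹ * x ^ (n : ℤ))
      rw [show y ^ (n : ℤ) * ((y ^ (n : ℤ))⁻¹ * x ^ (n : ℤ)) = x ^ (n : ℤ) by group,
        hφk, hhom x, hhom y] at this
      calc (n : ℝ) * |φ x - φ y| = |(n : ℝ) * (φ x - φ y) - 0| := by
            rw [sub_zero, abs_mul, Nat.abs_cast]
        _ = |(n : ℝ) * φ x - (n : ℝ) * φ y - 0| := by rw [mul_sub]
        _ ≤ D := by push_cast at this ⊢; exact this
    by_contra hne
    have habs : 0 < |φ x - φ y| := abs_pos.mpr (sub_ne_zero.mpr hne)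
    obtain ⟨n, hn⟩ := exists_nat_gt (D / |φ x - φ y|)
    have := hbound n
    have : (n : ℝ) ≤ D / |φ x - φ y| := (le_div_iff₀ habs).mpr this
    linarith
  -- define ψ using a section of p
  classical
  set s : H → G := Function.surjInv hp with hs
  have hps : ∀ h, p (s h) = h := Function.surjInv_eq hp
  refine ⟨fun h => φ (s h), ⟨D, ?_⟩, ?_, ?_⟩
  · intro h₁ h₂
    have h1 : φ (s (h₁ * h₂)) = φ (s h₁ * s h₂) := key _ _ (by simp [hps])
    show |φ (s (h₁ * h₂)) - φ (s h₁) - φ (s h₂)| ≤ D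
    rw [h1]; exact hD _ _
  · intro h n
    have h1 : φ (s (h ^ n)) = φ ((s h) ^ n) := key _ _ (by simp [hps])
    show φ (s (h ^ n)) = (n : ℝ) * φ (s h)
    rw [h1, hhom]
  · intro g
    exact key g (s (p g)) (by rw [hps])
end

section
/- Let G and H be groups, p : G → H a surjective group homomorphism with kernel K. Suppose that every homogeneous quasimorphism on H is identically zero. Then the restriction map from homogeneous quasimorphisms on G to homogeneous quasimorphisms on K is injective: if φ : G → ℝ is a homogeneous quasimorphism vanishing on K, then φ is identically zero. -/
/-- if every homogeneous quasimorphism on `H` vanishes and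
`p : G → H` is surjective with kernel `K`, then a homogeneous quasimorphism on `G`
vanishing on `K` is identically zero (i.e. restriction `Q(G) → Q(K)` is injective). -/
theorem restriction_injective {G H : Type*} [Group G] [Group H] (p : G →* H)
    (hp : Function.Surjective p)
    (hQH : ∀ ψ : H → ℝ, IsQuasimorphism ψ → IsHomogeneous ψ → ∀ h : H, ψ h = 0)
    (φ : G → ℝ) (hqm : IsQuasimorphism φ) (hhom : IsHomogeneous φ)
    (hker : ∀ g : G, g ∈ p.ker → φ g = 0) :
    ∀ g : G, φ g = 0 := by
  obtain ⟨C, hC⟩ := hqm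
  -- φ is constant on fibers of p
  have hconst : ∀ a b : G, p a = p b → φ a = φ b := by
    intro a b hab
    have key : ∀ n : ℕ, (n : ℝ) * |φ a - φ b| ≤ C := by
      intro n
      have hk : (b ^ (n : ℤ))⁻¹ * a ^ (n : ℤ) ∈ p.ker := by
        simp [MonoidHom.mem_ker, map_zpow, hab]
      have h0 : φ ((b ^ (n : ℤ))⁻¹ * a ^ (n : ℤ)) = 0 := hker _ hk
      have := hC (b ^ (n : ℤ)) ((b ^ (n : ℤ))⁻¹ * a ^ (n : ℤ))
      rw [mul_inv_cancel_left, h0, hhom a n, hhom b n, sub_zero] at this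
      calc (n : ℝ) * |φ a - φ b| = |(n : ℝ) * φ a - (n : ℝ) * φ b| := by
            rw [← mul_sub, abs_mul, Nat.abs_cast]
        _ ≤ C := by push_cast at this ⊢; linarith [abs_sub_comm ((n : ℝ) * φ a) ((n : ℝ) * φ b), this]
    by_contra hne
    have hpos : 0 < |φ a - φ b| := abs_pos.mpr (sub_ne_zero.mpr hne)
    obtain ⟨n, hn⟩ := exists_nat_gt (C / |φ a - φ b|)
    have : C < (n : ℝ) * |φ a - φ b| := by
      rw [← div_lt_iff₀ hpos] at *; exact hn
    linarith [key n]
  -- descend φ to ψ on H via a section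
  set s : H → G := Function.surjInv hp with hs
  have hps : ∀ h : H, p (s h) = h := fun h => Function.surjInv_eq hp h
  set ψ : H → ℝ := fun h => φ (s h) with hψ
  have hψp : ∀ g : G, ψ (p g) = φ g := fun g => hconst _ _ (hps _)
  have hψqm : IsQuasimorphism ψ := by
    refine ⟨C, fun h₁ h₂ => ?_⟩
    have e1 : ψ (h₁ * h₂) = φ (s h₁ * s h₂) := by
      rw [← hψp (s h₁ * s h₂), map_mul, hps, hps]
    rw [e1]; exact hC _ _
  have hψhom : IsHomogeneous ψ := by
    intro h n
    have : ψ (h ^ n) = φ (s h ^ n) := by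
      rw [← hψp (s h ^ n), map_zpow, hps]
    rw [this, hhom, hψ]
  intro g
  rw [← hψp g]
  exact hQH ψ hψqm hψhom (p g)
end

section
/- Let G and H be groups, p : G → H a surjective group homomorphism with kernel K. Suppose that every homogeneous quasimorphism on H is identically zero, and that there exists a function f : K → ℝ such that every homogeneous quasimorphism on K is a real scalar multiple of f. Then any two homogeneous quasimorphisms on G are linearly dependent over ℝ; that is, the real vector space of homogeneous quasimorphisms on G has dimension at most 1. -/
/-- A real number whose absolute value is at most `C / n` for all positive `n` is zero. -/
lemma abs_le_div_nat_eq_zero (x C : ℝ) (h : ∀ n : ℕ, 0 < n → |x| ≤ C / n) : x = 0 := by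
  by_contra hx
  have hx' : 0 < |x| := abs_pos.mpr hx
  have hC : 0 < C := lt_of_lt_of_le hx' (by simpa using h 1 one_pos)
  obtain ⟨n, hn⟩ := exists_nat_gt (C / |x|)
  have hn0 : 0 < n := by
    rcases Nat.eq_zero_or_pos n with h0 | h0
    · exfalso
      rw [h0] at hn
      have := div_pos hC hx'
      norm_num at hn
      linarith
    · exact h0
  have h1 := h n hn0
  have hnpos : (0 : ℝ) < n := by exact_mod_cast hn0
  rw [le_div_iff₀ hnpos] at h1
  rw [div_lt_iff₀ hx'] at hn
  nlinarith

/-- A homogeneous quasimorphism that vanishes on the kernel of a surjection `p : G → H`,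
where all homogeneous quasimorphisms on `H` vanish, vanishes identically. -/
lemma vanish_of_ker {G H : Type*} [Group G] [Group H] (p : G →* H)
    (hp : Function.Surjective p)
    (hQH : ∀ ψ : H → ℝ, IsQuasimorphism ψ → IsHomogeneous ψ → ∀ h : H, ψ h = 0)
    (ψ : G → ℝ) (hq : IsQuasimorphism ψ) (hh : IsHomogeneous ψ)
    (hker : ∀ k : G, k ∈ p.ker → ψ k = 0) : ∀ g : G, ψ g = 0 := by
  obtain ⟨C, hC⟩ := hq
  have hψ1 : ψ 1 = 0 := by
    have := hh 1 0
    simpa using this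
  -- coset bound
  have hcos : ∀ g₁ g₂ : G, p g₁ = p g₂ → |ψ g₁ - ψ g₂| ≤ C := by
    intro g₁ g₂ hpe
    have hk : g₂⁻¹ * g₁ ∈ p.ker := by
      rw [MonoidHom.mem_ker, map_mul, map_inv, hpe, inv_mul_cancel]
    have hk0 : ψ (g₂⁻¹ * g₁) = 0 := hker _ hk
    have := hC g₂ (g₂⁻¹ * g₁)
    rw [hk0, mul_inv_cancel_left] at this
    simpa using this
  set s : H → G := Function.surjInv hp with hs_def
  have hs : ∀ h : H, p (s h) = h := Function.surjInv_eq hp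
  set ψ' : H → ℝ := fun h => ψ (s h) with hψ'
  -- ψ' is a quasimorphism
  have hq' : IsQuasimorphism ψ' := by
    refine ⟨C + C, fun h₁ h₂ => ?_⟩
    have e1 : p (s (h₁ * h₂)) = p (s h₁ * s h₂) := by
      rw [map_mul, hs, hs, hs]
    have b1 := hcos _ _ e1
    have b2 := hC (s h₁) (s h₂)
    calc |ψ' (h₁ * h₂) - ψ' h₁ - ψ' h₂|
        = |(ψ (s (h₁ * h₂)) - ψ (s h₁ * s h₂)) +
            (ψ (s h₁ * s h₂) - ψ (s h₁) - ψ (s h₂))| := by ring_nf; rfl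
      _ ≤ |ψ (s (h₁ * h₂)) - ψ (s h₁ * s h₂)| +
            |ψ (s h₁ * s h₂) - ψ (s h₁) - ψ (s h₂)| := abs_add_le _ _
      _ ≤ C + C := add_le_add b1 b2
  -- ψ' is homogeneous
  have hh' : IsHomogeneous ψ' := by
    intro h m
    have key : ∀ n : ℕ, 0 < n →
        |ψ (s (h ^ m)) - (m : ℝ) * ψ (s h)| ≤ C / n := by
      intro n hn
      have hnpos : (0 : ℝ) < n := by exact_mod_cast hn
      have e1 : p ((s (h ^ m)) ^ (n : ℤ)) = p ((s h) ^ (m * n)) := by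
        rw [map_zpow, map_zpow, hs, hs, ← zpow_mul]
      have b1 := hcos _ _ e1
      rw [hh (s (h ^ m)) (n : ℤ), hh (s h) (m * n)] at b1
      have : |(n : ℝ) * (ψ (s (h ^ m)) - (m : ℝ) * ψ (s h))| ≤ C := by
        have e : (n : ℝ) * (ψ (s (h ^ m)) - (m : ℝ) * ψ (s h))
            = ((n : ℤ) : ℝ) * ψ (s (h ^ m)) - ((m * (n : ℤ) : ℤ) : ℝ) * ψ (s h) := by
          push_cast; ring
        rw [e]
        exact b1
      rw [abs_mul, abs_of_pos hnpos] at this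
      rw [le_div_iff₀ hnpos]
      linarith
    have := abs_le_div_nat_eq_zero (ψ (s (h ^ m)) - (m : ℝ) * ψ (s h)) C key
    have := sub_eq_zero.mp this
    simpa [ψ'] using this
  have hzero := hQH ψ' hq' hh'
  -- ψ is bounded by C
  have hbd : ∀ g : G, |ψ g| ≤ C := by
    intro g
    have e1 : p g = p (s (p g)) := (hs (p g)).symm
    have := hcos _ _ e1
    have h0 : ψ' (p g) = 0 := hzero (p g)
    simp only [ψ'] at h0
    rwa [h0, sub_zero] at this
  intro g
  refine abs_le_div_nat_eq_zero (ψ g) C (fun n hn => ?_) 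
  have hnpos : (0 : ℝ) < n := by exact_mod_cast hn
  have := hbd (g ^ (n : ℤ))
  rw [hh g (n : ℤ)] at this
  rw [abs_mul, abs_of_pos (by exact_mod_cast hn : (0:ℝ) < ((n:ℤ):ℝ))] at this
  rw [le_div_iff₀ hnpos]
  push_cast at this ⊢
  linarith

/-- if `p : G → H` is surjective, every homogeneous quasimorphism on `H`
vanishes, and every homogeneous quasimorphism on `K = ker p` is a scalar multiple of one
fixed function `f`, then the space of homogeneous quasimorphisms on `G` has dimension
at most 1: any two homogeneous quasimorphisms on `G` are linearly dependent over `ℝ`. -/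
theorem dim_q_le_one {G H : Type*} [Group G] [Group H] (p : G →* H)
    (hp : Function.Surjective p)
    (hQH : ∀ ψ : H → ℝ, IsQuasimorphism ψ → IsHomogeneous ψ → ∀ h : H, ψ h = 0)
    (hQK : ∃ f : p.ker → ℝ, ∀ φ : p.ker → ℝ, IsQuasimorphism φ → IsHomogeneous φ →
      ∃ c : ℝ, ∀ x : p.ker, φ x = c * f x) :
    ∀ φ₁ φ₂ : G → ℝ, IsQuasimorphism φ₁ → IsHomogeneous φ₁ →
      IsQuasimorphism φ₂ → IsHomogeneous φ₂ →
      ∃ a b : ℝ, ¬(a = 0 ∧ b = 0) ∧ ∀ g : G, a * φ₁ g + b * φ₂ g = 0 := by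
  obtain ⟨f, hf⟩ := hQK
  intro φ₁ φ₂ hq₁ hh₁ hq₂ hh₂
  -- restrictions to the kernel
  have hrestr : ∀ (φ : G → ℝ), IsQuasimorphism φ → IsHomogeneous φ →
      ∃ c : ℝ, ∀ x : p.ker, φ x = c * f x := by
    intro φ ⟨C, hC⟩ hh
    refine hf (fun x => φ x) ⟨C, fun g h => by simpa using hC g h⟩ (fun x n => ?_)
    show φ ((x ^ n : p.ker) : G) = (n : ℝ) * φ (x : G)
    rw [SubgroupClass.coe_zpow]
    exact hh (x : G) n
  obtain ⟨c₁, hc₁⟩ := hrestr φ₁ hq₁ hh₁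
  obtain ⟨c₂, hc₂⟩ := hrestr φ₂ hq₂ hh₂
  by_cases h1 : c₁ = 0
  · -- φ₁ vanishes on the kernel, hence everywhere
    have hker : ∀ k : G, k ∈ p.ker → φ₁ k = 0 := by
      intro k hk
      have := hc₁ ⟨k, hk⟩
      simpa [h1] using this
    have := vanish_of_ker p hp hQH φ₁ hq₁ hh₁ hker
    exact ⟨1, 0, by simp, fun g => by simp [this g]⟩
  · -- consider ψ = c₂ φ₁ - c₁ φ₂
    obtain ⟨C₁, hC₁⟩ := hq₁
    obtain ⟨C₂, hC₂⟩ := hq₂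
    set ψ : G → ℝ := fun g => c₂ * φ₁ g - c₁ * φ₂ g with hψ
    have hqψ : IsQuasimorphism ψ := by
      refine ⟨|c₂| * C₁ + |c₁| * C₂, fun g h => ?_⟩
      have b1 := hC₁ g h
      have b2 := hC₂ g h
      have : |ψ (g * h) - ψ g - ψ h| =
          |c₂ * (φ₁ (g * h) - φ₁ g - φ₁ h) - c₁ * (φ₂ (g * h) - φ₂ g - φ₂ h)| := by
        simp only [ψ]; ring_nf
      rw [this]
      calc |c₂ * (φ₁ (g * h) - φ₁ g - φ₁ h) - c₁ * (φ₂ (g * h) - φ₂ g - φ₂ h)|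
          ≤ |c₂ * (φ₁ (g * h) - φ₁ g - φ₁ h)| + |c₁ * (φ₂ (g * h) - φ₂ g - φ₂ h)| :=
            abs_sub _ _
        _ = |c₂| * |φ₁ (g * h) - φ₁ g - φ₁ h| + |c₁| * |φ₂ (g * h) - φ₂ g - φ₂ h| := by
            rw [abs_mul, abs_mul]
        _ ≤ |c₂| * C₁ + |c₁| * C₂ :=
            add_le_add (mul_le_mul_of_nonneg_left b1 (abs_nonneg _))
              (mul_le_mul_of_nonneg_left b2 (abs_nonneg _))
    have hhψ : IsHomogeneous ψ := by
      intro g n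
      simp only [ψ, hh₁ g n, hh₂ g n]
      ring
    have hker : ∀ k : G, k ∈ p.ker → ψ k = 0 := by
      intro k hk
      simp only [ψ]
      rw [hc₁ ⟨k, hk⟩, hc₂ ⟨k, hk⟩]
      ring
    have hzero := vanish_of_ker p hp hQH ψ hqψ hhψ hker
    refine ⟨c₂, -c₁, fun ⟨_, hb⟩ => h1 (by linarith), fun g => ?_⟩
    have := hzero g
    simp only [ψ] at this
    linarith
end

section
/- Let G be a group, let χ : G × G → ℤ be a bounded 2-cocycle (i.e. χ(s,t) + χ(st,u) = χ(t,u) + χ(s,tu) for all s,t,u ∈ G, and sup |χ| < ∞, with χ(1,1) = 0), and for a nonzero integer n let G_n denote the central extension G × ℤ with multiplication (s,i)·(t,j) = (st, i + j + n·χ(s,t)), and let φ_n : G_n → ℝ be the homogenization of the quasimorphism (t,j) ↦ j. Then the defect of φ_n satisfies D(φ_n) = |n|·D(φ_1). -/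
open Filter Topology

/-- Multiplication of the central extension `G × ℤ` determined by `n` times the
integral 2-cocycle `χ`: `(s,i)·(t,j) = (st, i + j + n·χ(s,t))`. -/
def extMul {G : Type*} [Group G] (n : ℤ) (χ : G → G → ℤ) (x y : G × ℤ) : G × ℤ :=
  (x.1 * y.1, x.2 + y.2 + n * χ x.1 y.1)

/-- Powers in the central extension `G × ℤ` (with `x ^ 0 = (1, 0)`). -/
def extPow {G : Type*} [Group G] (n : ℤ) (χ : G → G → ℤ) (x : G × ℤ) : ℕ → G × ℤ
  | 0 => (1, 0)
  | k + 1 => extMul n χ (extPow n χ x k) x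

/-- The defect of a function on the central extension `G × ℤ` with the multiplication
twisted by `n` times the cocycle `χ`. -/
noncomputable def extDefect {G : Type*} [Group G] (n : ℤ) (χ : G → G → ℤ)
    (φ : G × ℤ → ℝ) : ℝ :=
  sSup {r : ℝ | ∃ x y : G × ℤ, r = |φ (extMul n χ x y) - φ x - φ y|}

def cocSum {G : Type*} [Group G] (χ : G → G → ℤ) (g : G) : ℕ → ℤ
  | 0 => 0
  | k + 1 => cocSum χ g k + χ (g ^ k) g

lemma extPow_eq {G : Type*} [Group G] (n : ℤ) (χ : G → G → ℤ) (x : G × ℤ) (k : ℕ) :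
    extPow n χ x k = (x.1 ^ k, k * x.2 + n * cocSum χ x.1 k) := by
  induction k with
  | zero => simp [extPow, cocSum]
  | succ k ih =>
      rw [extPow, ih]
      simp only [extMul, cocSum, pow_succ]
      refine Prod.ext rfl ?_
      push_cast
      ring

/-- if `χ` is a bounded 2-cocycle with `χ(1,1) = 0`, `n ≠ 0`, and
`φ₁`, `φₙ` are the homogenizations of the second-coordinate projections on the central
extensions `G₁` and `Gₙ` respectively, then `D(φₙ) = |n| · D(φ₁)`. -/
theorem defect_central_extension {G : Type*} [Group G] (χ : G → G → ℤ)
    (hcoc : ∀ s t u : G, χ s t + χ (s * t) u = χ t u + χ s (t * u))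
    (hbdd : ∃ C : ℤ, ∀ s t : G, |χ s t| ≤ C)
    (hone : χ 1 1 = 0)
    (n : ℤ) (hn : n ≠ 0)
    (φ₁ φₙ : G × ℤ → ℝ)
    (hφ₁ : ∀ x : G × ℤ, Tendsto (fun k : ℕ => ((extPow 1 χ x k).2 : ℝ) / (k : ℝ))
      atTop (𝓝 (φ₁ x)))
    (hφₙ : ∀ x : G × ℤ, Tendsto (fun k : ℕ => ((extPow n χ x k).2 : ℝ) / (k : ℝ))
      atTop (𝓝 (φₙ x))) :
    extDefect n χ φₙ = |(n : ℝ)| * extDefect 1 χ φ₁ := by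
  obtain ⟨C, hC⟩ := hbdd
  have hC0 : (0:ℤ) ≤ C := le_trans (abs_nonneg _) (hC 1 1)
  set ψ : G → ℝ := fun g => φ₁ (g, 0) with hψdef
  have hS : ∀ g : G, Tendsto (fun k : ℕ => ((cocSum χ g k : ℝ)) / (k : ℝ)) atTop (𝓝 (ψ g)) := by
    intro g
    have h := hφ₁ (g, 0)
    simp only [extPow_eq] at h
    simpa using h
  have hval : ∀ (m : ℤ) (φ : G × ℤ → ℝ),
      (∀ x : G × ℤ, Tendsto (fun k : ℕ => ((extPow m χ x k).2 : ℝ) / (k : ℝ))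
        atTop (𝓝 (φ x))) →
      ∀ g i, φ (g, i) = (i : ℝ) + m * ψ g := by
    intro m φ hφ g i
    have h2 : Tendsto (fun k : ℕ => (i : ℝ) + (m : ℝ) * ((cocSum χ g k : ℝ) / k)) atTop
        (𝓝 ((i : ℝ) + m * ψ g)) := tendsto_const_nhds.add ((hS g).const_mul _)
    have h1 : Tendsto (fun k : ℕ => ((extPow m χ (g,i) k).2 : ℝ) / (k : ℝ)) atTop
        (𝓝 ((i : ℝ) + m * ψ g)) := by
      refine h2.congr' ?_
      filter_upwards [eventually_ge_atTop 1] with k hk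
      have hk0 : (k : ℝ) ≠ 0 := by positivity
      rw [extPow_eq]
      push_cast
      field_simp
    exact tendsto_nhds_unique (hφ (g,i)) h1
  have hφ₁val : ∀ g i, φ₁ (g, i) = (i : ℝ) + ψ g := by
    intro g i
    simpa using hval 1 φ₁ hφ₁ g i
  have hφₙval : ∀ g i, φₙ (g, i) = (i : ℝ) + n * ψ g := hval n φₙ hφₙ
  have hSbound : ∀ g (k : ℕ), |cocSum χ g k| ≤ k * C := by
    intro g k
    induction k with
    | zero => simp [cocSum]
    | succ k ih =>
        calc |cocSum χ g (k+1)| ≤ |cocSum χ g k| + |χ (g^k) g| := abs_add_le _ _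
        _ ≤ k * C + C := add_le_add ih (hC _ _)
        _ = (k+1 : ℕ) * C := by push_cast; ring
  have hψbound : ∀ g, |ψ g| ≤ (C : ℝ) := by
    intro g
    refine le_of_tendsto (hS g).abs ?_
    filter_upwards [eventually_ge_atTop 1] with k hk
    have hk0 : (0:ℝ) < (k : ℝ) := by positivity
    rw [abs_div, abs_of_pos hk0, div_le_iff₀ hk0]
    calc |(cocSum χ g k : ℝ)| ≤ (k : ℝ) * C := by exact_mod_cast hSbound g k
    _ = (C:ℝ) * k := by ring
  set E : G → G → ℝ := fun s t => (χ s t : ℝ) + ψ (s*t) - ψ s - ψ t with hEdef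
  have hEbound : ∀ s t, |E s t| ≤ 4 * C := by
    intro s t
    have h1 : |(χ s t : ℝ)| ≤ (C:ℝ) := by exact_mod_cast (by simpa using hC s t : |χ s t| ≤ C)
    calc |E s t| ≤ |(χ s t : ℝ)| + |ψ (s*t)| + |ψ s| + |ψ t| := by
          simp only [hEdef]
          have := abs_add_le ((χ s t : ℝ) + ψ (s*t) - ψ s) (-ψ t)
          have h2 := abs_add_le ((χ s t : ℝ) + ψ (s*t)) (-ψ s)
          have h3 := abs_add_le (χ s t : ℝ) (ψ (s*t))
          simp only [abs_neg, sub_eq_add_neg] at *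
          linarith
    _ ≤ C + C + C + C := by
          have := hψbound (s*t); have := hψbound s; have := hψbound t
          linarith
    _ = 4 * C := by ring
  have hset1 : {r : ℝ | ∃ x y : G × ℤ, r = |φ₁ (extMul 1 χ x y) - φ₁ x - φ₁ y|}
      = {r : ℝ | ∃ s t : G, r = |E s t|} := by
    ext r
    constructor
    · rintro ⟨⟨s,i⟩,⟨t,j⟩,rfl⟩
      refine ⟨s, t, ?_⟩
      simp only [extMul, hφ₁val, hEdef]
      congr 1
      push_cast
      ring
    · rintro ⟨s,t,rfl⟩
      refine ⟨(s,0),(t,0), ?_⟩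
      simp only [extMul, hφ₁val, hEdef]
      congr 1
      push_cast
      ring
  have hsetn : {r : ℝ | ∃ x y : G × ℤ, r = |φₙ (extMul n χ x y) - φₙ x - φₙ y|}
      = {r : ℝ | ∃ s t : G, r = |(n:ℝ)| * |E s t|} := by
    ext r
    constructor
    · rintro ⟨⟨s,i⟩,⟨t,j⟩,rfl⟩
      refine ⟨s, t, ?_⟩
      rw [← abs_mul]
      simp only [extMul, hφₙval, hEdef]
      congr 1
      push_cast
      ring
    · rintro ⟨s,t,rfl⟩
      refine ⟨(s,0),(t,0), ?_⟩
      rw [← abs_mul]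
      simp only [extMul, hφₙval, hEdef]
      congr 1
      push_cast
      ring
  have hne1 : ({r : ℝ | ∃ s t : G, r = |E s t|}).Nonempty := ⟨|E 1 1|, 1, 1, rfl⟩
  have hbdd1 : BddAbove {r : ℝ | ∃ s t : G, r = |E s t|} := by
    refine ⟨4 * C, ?_⟩
    rintro r ⟨s,t,rfl⟩
    exact hEbound s t
  have hlub1 : IsLUB {r : ℝ | ∃ s t : G, r = |E s t|}
      (sSup {r : ℝ | ∃ s t : G, r = |E s t|}) := isLUB_csSup hne1 hbdd1
  set d := sSup {r : ℝ | ∃ s t : G, r = |E s t|} with hd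
  have hnpos : (0:ℝ) < |(n:ℝ)| := by
    rw [abs_pos]
    exact_mod_cast hn
  have hlubn : IsLUB {r : ℝ | ∃ s t : G, r = |(n:ℝ)| * |E s t|} (|(n:ℝ)| * d) := by
    constructor
    · rintro r ⟨s,t,rfl⟩
      exact mul_le_mul_of_nonneg_left (hlub1.1 ⟨s,t,rfl⟩) (abs_nonneg _)
    · rintro b hb
      have hub : ∀ r ∈ {r : ℝ | ∃ s t : G, r = |E s t|}, r ≤ b / |(n:ℝ)| := by
        rintro r ⟨s,t,rfl⟩
        rw [le_div_iff₀ hnpos, mul_comm]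
        exact hb ⟨s, t, rfl⟩
      have := csSup_le hne1 hub
      rw [← hd] at this
      calc |(n:ℝ)| * d ≤ |(n:ℝ)| * (b / |(n:ℝ)|) :=
            mul_le_mul_of_nonneg_left this (abs_nonneg _)
      _ = b := by field_simp
  have h1 : extDefect 1 χ φ₁ = d := by rw [extDefect, hset1]
  have hn1 : extDefect n χ φₙ = |(n:ℝ)| * d := by
    rw [extDefect, hsetn]
    exact hlubn.csSup_eq ⟨|(n:ℝ)| * |E 1 1|, 1, 1, rfl⟩
  rw [h1, hn1]
end

section
/- Let G be a group, let χ : G × G → ℤ be a bounded 2-cocycle with χ(1,1) = 0, for a nonzero integer n let G_n denote the central extension G × ℤ with multiplication (s,i)·(t,j) = (st, i + j + n·χ(s,t)), and let φ_n : G_n → ℝ be the homogenization of the quasimorphism (t,j) ↦ j. If the image φ_1(G_1) equals the set ℚ of rational numbers, then the image φ_n(G_n) also equals ℚ. -/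
open Filter Topology

theorem extPow_fst {G : Type*} [Group G] (m : ℤ) (χ : G → G → ℤ) (x : G × ℤ) (k : ℕ) :
    (extPow m χ x k).1 = x.1 ^ k := by
  induction k with
  | zero => simp [extPow]
  | succ k ih => simp [extPow, extMul, ih, pow_succ]

theorem extPow_snd {G : Type*} [Group G] (m : ℤ) (χ : G → G → ℤ) (s : G) (i : ℤ) (k : ℕ) :
    (extPow m χ (s, i) k).2 = k * i + m * (extPow 1 χ (s, 0) k).2 := by
  induction k with
  | zero => simp [extPow]
  | succ k ih =>
    simp only [extPow, extMul, ih, extPow_fst]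
    push_cast
    ring

/-- if `χ` is a bounded 2-cocycle with `χ(1,1) = 0`, `n ≠ 0`, and
`φ₁`, `φₙ` are the homogenizations of the second-coordinate projections on the central
extensions `G₁` and `Gₙ`, then `φ₁(G₁) = ℚ` implies `φₙ(Gₙ) = ℚ`. -/
theorem image_central_extension_rational {G : Type*} [Group G] (χ : G → G → ℤ)
    (hcoc : ∀ s t u : G, χ s t + χ (s * t) u = χ t u + χ s (t * u))
    (hbdd : ∃ C : ℤ, ∀ s t : G, |χ s t| ≤ C)
    (hone : χ 1 1 = 0)
    (n : ℤ) (hn : n ≠ 0)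
    (φ₁ φₙ : G × ℤ → ℝ)
    (hφ₁ : ∀ x : G × ℤ, Tendsto (fun k : ℕ => ((extPow 1 χ x k).2 : ℝ) / (k : ℝ))
      atTop (𝓝 (φ₁ x)))
    (hφₙ : ∀ x : G × ℤ, Tendsto (fun k : ℕ => ((extPow n χ x k).2 : ℝ) / (k : ℝ))
      atTop (𝓝 (φₙ x)))
    (him : Set.range φ₁ = Set.range ((↑) : ℚ → ℝ)) :
    Set.range φₙ = Set.range ((↑) : ℚ → ℝ) := by
  -- value formula: any homogenization of the second projection on `G_m` satisfies
  -- `φ (s, i) = i + m * φ₁ (s, 0)`.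
  have key : ∀ (m : ℤ) (φ : G × ℤ → ℝ),
      (∀ x : G × ℤ, Tendsto (fun k : ℕ => ((extPow m χ x k).2 : ℝ) / (k : ℝ))
        atTop (𝓝 (φ x))) →
      ∀ (s : G) (i : ℤ), φ (s, i) = i + m * φ₁ (s, 0) := by
    intro m φ hφ s i
    have hlim : Tendsto (fun k : ℕ => (i : ℝ) + m * (((extPow 1 χ (s, 0) k).2 : ℝ) / k))
        atTop (𝓝 ((i : ℝ) + m * φ₁ (s, 0))) :=
      tendsto_const_nhds.add ((hφ₁ (s, 0)).const_mul (m : ℝ))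
    have heq : (fun k : ℕ => ((extPow m χ (s, i) k).2 : ℝ) / k) =ᶠ[atTop]
        (fun k : ℕ => (i : ℝ) + m * (((extPow 1 χ (s, 0) k).2 : ℝ) / k)) := by
      filter_upwards [eventually_ge_atTop 1] with k hk
      have hk0 : (k : ℝ) ≠ 0 := by positivity
      rw [extPow_snd]
      push_cast
      field_simp
    exact tendsto_nhds_unique (hφ (s, i)) (hlim.congr' heq.symm)
  ext r
  simp only [Set.mem_range]
  constructor
  · rintro ⟨⟨s, i⟩, rfl⟩
    rw [key n φₙ hφₙ s i]
    have : φ₁ (s, 0) ∈ Set.range ((↑) : ℚ → ℝ) := him ▸ Set.mem_range_self _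
    obtain ⟨q, hq⟩ := this
    exact ⟨i + n * q, by push_cast [← hq]; ring⟩
  · rintro ⟨q, rfl⟩
    have : ((q / n : ℚ) : ℝ) ∈ Set.range φ₁ := him ▸ ⟨_, rfl⟩
    obtain ⟨⟨s, i⟩, hx⟩ := this
    have h1 := key 1 φ₁ hφ₁ s i
    have hs0 : φ₁ (s, 0) = ((q / n : ℚ) : ℝ) - i := by
      rw [← hx, h1]; push_cast; ring
    refine ⟨(s, n * i), ?_⟩
    rw [key n φₙ hφₙ s (n * i), hs0]
    have hn' : (n : ℝ) ≠ 0 := Int.cast_ne_zero.mpr hn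
    push_cast
    field_simp
    ring
end
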